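/- For every n, r ∈ ℕ with r ≥ 1 and arbitrary nonnegative real numbers a₁, ..., a_n, one has (a₁ + ... + a_n)^r ≤ (r(r−1))^{r−1} · Σ_{i=1}^n a_i^r + 2 · Σ a_{i₁}⋯a_{i_r}, where the second sum ranges over all r-tuples (i₁,...,i_r) of pairwise distinct indices in {1,...,n}. -/

import Mathlib

open Finset

private lemma cs_step {n : ℕ} (a : Fin n → ℝ) (ha : ∀ i, 0 ≤ a i) (p : ℕ) :
    (∑ i, a i ^ (p + 1)) ^ 2 ≤ (∑ i, a i ^ p) * (∑ i, a i ^ (p + 2)) := by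
  have h := Finset.sum_mul_sq_le_sq_mul_sq Finset.univ
      (fun i : Fin n => Real.sqrt (a i ^ p)) (fun i => Real.sqrt (a i ^ (p + 2)))
  have h1 : ∀ i : Fin n, Real.sqrt (a i ^ p) * Real.sqrt (a i ^ (p + 2)) = a i ^ (p + 1) := by
    intro i
    rw [← Real.sqrt_mul (pow_nonneg (ha i) p), ← pow_add]
    have e : p + (p + 2) = (p + 1) * 2 := by ring
    rw [e, pow_mul, Real.sqrt_sq (pow_nonneg (ha i) (p+1))]
  have h2 : ∀ i : Fin n, Real.sqrt (a i ^ p) ^ 2 = a i ^ p := fun i =>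
    Real.sq_sqrt (pow_nonneg (ha i) _)
  have h3 : ∀ i : Fin n, Real.sqrt (a i ^ (p + 2)) ^ 2 = a i ^ (p + 2) := fun i =>
    Real.sq_sqrt (pow_nonneg (ha i) _)
  simpa only [h1, h2, h3] using h

private lemma ratio_step {n : ℕ} (a : Fin n → ℝ) (ha : ∀ i, 0 ≤ a i) (k : ℕ) :
    (∑ i, a i ^ 2) * (∑ i, a i ^ (k + 1)) ≤ (∑ i, a i ^ 1) * (∑ i, a i ^ (k + 2)) := by
  induction k with
  | zero => rw [mul_comm]
  | succ k ih =>
    have hD : ∀ q : ℕ, (0:ℝ) ≤ ∑ i, a i ^ q := fun q =>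
      Finset.sum_nonneg fun i _ => pow_nonneg (ha i) q
    rcases eq_or_lt_of_le (hD (k + 2)) with h0 | h0
    · calc (∑ i, a i ^ 2) * (∑ i, a i ^ (k + 2)) = 0 := by rw [← h0, mul_zero]
        _ ≤ _ := mul_nonneg (hD 1) (hD (k + 3))
    · have hcs := cs_step a ha (k + 1)
      have key : ((∑ i, a i ^ 2) * (∑ i, a i ^ (k + 2))) * (∑ i, a i ^ (k + 2))
          ≤ ((∑ i, a i ^ 1) * (∑ i, a i ^ (k + 3))) * (∑ i, a i ^ (k + 2)) := by
        calc ((∑ i, a i ^ 2) * (∑ i, a i ^ (k + 2))) * (∑ i, a i ^ (k + 2))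
            = (∑ i, a i ^ 2) * (∑ i, a i ^ (k + 2)) ^ 2 := by ring
          _ ≤ (∑ i, a i ^ 2) * ((∑ i, a i ^ (k + 1)) * (∑ i, a i ^ (k + 3))) := by
              have := cs_step a ha (k + 1)
              exact mul_le_mul_of_nonneg_left (by simpa using this) (hD 2)
          _ = ((∑ i, a i ^ 2) * (∑ i, a i ^ (k + 1))) * (∑ i, a i ^ (k + 3)) := by ring
          _ ≤ ((∑ i, a i ^ 1) * (∑ i, a i ^ (k + 2))) * (∑ i, a i ^ (k + 3)) :=
              mul_le_mul_of_nonneg_right ih (hD (k + 3))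
          _ = ((∑ i, a i ^ 1) * (∑ i, a i ^ (k + 3))) * (∑ i, a i ^ (k + 2)) := by ring
      exact le_of_mul_le_mul_right key h0

private lemma holder_pow {n : ℕ} (a : Fin n → ℝ) (ha : ∀ i, 0 ≤ a i) (m : ℕ) :
    (∑ i, a i ^ 2) ^ (m + 1) ≤ (∑ i, a i) ^ m * (∑ i, a i ^ (m + 2)) := by
  have hD : ∀ q : ℕ, (0:ℝ) ≤ ∑ i, a i ^ q := fun q =>
    Finset.sum_nonneg fun i _ => pow_nonneg (ha i) q
  have hS : (0:ℝ) ≤ ∑ i, a i := Finset.sum_nonneg fun i _ => ha i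
  have h1 : (∑ i, a i ^ 1) = ∑ i, a i := by simp
  induction m with
  | zero => simp
  | succ m ih =>
    calc (∑ i, a i ^ 2) ^ (m + 2) = (∑ i, a i ^ 2) ^ (m + 1) * (∑ i, a i ^ 2) := by ring
      _ ≤ ((∑ i, a i) ^ m * (∑ i, a i ^ (m + 2))) * (∑ i, a i ^ 2) :=
          mul_le_mul_of_nonneg_right ih (hD 2)
      _ = (∑ i, a i) ^ m * ((∑ i, a i ^ 2) * (∑ i, a i ^ (m + 2))) := by ring
      _ ≤ (∑ i, a i) ^ m * ((∑ i, a i ^ 1) * (∑ i, a i ^ (m + 3))) :=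
          mul_le_mul_of_nonneg_left (ratio_step a ha (m + 1)) (pow_nonneg hS m)
      _ = (∑ i, a i) ^ (m + 1) * (∑ i, a i ^ (m + 3)) := by rw [h1]; ring

private lemma pair_sum {n r : ℕ} (a : Fin n → ℝ) {j k : Fin r} (hjk : j ≠ k) :
    ∑ σ ∈ Finset.univ.filter (fun σ : Fin r → Fin n => σ j = σ k), ∏ m, a (σ m)
      = (∑ i, a i ^ 2) * (∑ i, a i) ^ (r - 2) := by
  classical
  set t : Fin n → Fin r → Finset (Fin n) :=
    fun z m => if m = j ∨ m = k then {z} else Finset.univ with ht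
  have hset : Finset.univ.filter (fun σ : Fin r → Fin n => σ j = σ k)
      = Finset.univ.biUnion (fun z => Fintype.piFinset (t z)) := by
    ext σ
    simp only [Finset.mem_filter, Finset.mem_univ, true_and, Finset.mem_biUnion,
      Fintype.mem_piFinset, ht]
    constructor
    · intro h
      refine ⟨σ j, fun m => ?_⟩
      by_cases hm : m = j ∨ m = k
      · rw [if_pos hm]
        rcases hm with rfl | rfl
        · exact Finset.mem_singleton_self _
        · exact Finset.mem_singleton.2 h.symm
      · rw [if_neg hm]; exact Finset.mem_univ _
    · rintro ⟨z, hz⟩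
      have h1 := hz j
      have h2 := hz k
      rw [if_pos (Or.inl rfl)] at h1
      rw [if_pos (Or.inr rfl)] at h2
      rw [Finset.mem_singleton.1 h1, Finset.mem_singleton.1 h2]
  have hdisj : ((Finset.univ : Finset (Fin n)) : Set (Fin n)).PairwiseDisjoint
      (fun z => Fintype.piFinset (t z)) := by
    intro z _ z' _ hzz'
    refine Finset.disjoint_left.2 fun σ h1 h2 => hzz' ?_
    have e1 := Fintype.mem_piFinset.1 h1 j
    have e2 := Fintype.mem_piFinset.1 h2 j
    simp only [ht, true_or, if_true, Finset.mem_singleton] at e1 e2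
    rw [← e1, ← e2]
  rw [hset, Finset.sum_biUnion hdisj]
  have hfilt2 : (Finset.univ.filter (fun m : Fin r => m = j ∨ m = k)).card = 2 := by
    have : Finset.univ.filter (fun m : Fin r => m = j ∨ m = k) = {j, k} := by
      ext m; simp [Finset.mem_insert]
    rw [this, Finset.card_insert_of_notMem (by simpa using hjk), Finset.card_singleton]
  have hfiltc : (Finset.univ.filter (fun m : Fin r => ¬(m = j ∨ m = k))).card = r - 2 := by
    have := Finset.card_filter_add_card_filter_not
      (s := (Finset.univ : Finset (Fin r))) (p := fun m => m = j ∨ m = k)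
    rw [hfilt2, Finset.card_univ, Fintype.card_fin] at this
    omega
  have hinner : ∀ z : Fin n, ∑ σ ∈ Fintype.piFinset (t z), ∏ m, a (σ m)
      = a z ^ 2 * (∑ i, a i) ^ (r - 2) := by
    intro z
    rw [← Finset.prod_univ_sum]
    have : ∀ m : Fin r, (∑ i ∈ t z m, a i)
        = if m = j ∨ m = k then a z else ∑ i, a i := by
      intro m
      simp only [ht]
      split_ifs with hm <;> simp
    rw [Finset.prod_congr rfl (fun m _ => this m), Finset.prod_ite,
      Finset.prod_const, Finset.prod_const, hfilt2, hfiltc]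
  calc ∑ z, ∑ σ ∈ Fintype.piFinset (t z), ∏ m, a (σ m)
      = ∑ z, a z ^ 2 * (∑ i, a i) ^ (r - 2) := Finset.sum_congr rfl fun z _ => hinner z
    _ = (∑ i, a i ^ 2) * (∑ i, a i) ^ (r - 2) := by rw [← Finset.sum_mul]

private lemma sum_biUnion_le_nonneg {α β : Type*} [DecidableEq β] (s : Finset α)
    (t : α → Finset β) (f : β → ℝ) (hf : ∀ b, 0 ≤ f b) :
    ∑ b ∈ s.biUnion t, f b ≤ ∑ x ∈ s, ∑ b ∈ t x, f b := by
  classical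
  induction s using Finset.induction with
  | empty => simp
  | insert _ _ hx ih =>
    rename_i x s
    rw [Finset.biUnion_insert, Finset.sum_insert hx]
    have h1 : ∑ b ∈ t x ∪ s.biUnion t, f b ≤ (∑ b ∈ t x, f b) + ∑ b ∈ s.biUnion t, f b := by
      have := Finset.sum_union_inter (s₁ := t x) (s₂ := s.biUnion t) (f := f)
      have h0 : (0:ℝ) ≤ ∑ b ∈ t x ∩ s.biUnion t, f b :=
        Finset.sum_nonneg fun b _ => hf b
      linarith
    exact h1.trans (by linarith)

/-- For every `n, r ∈ ℕ` with `r ≥ 1` and nonnegative reals `a₁, …, a_n`: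
`(a₁ + ⋯ + a_n)^r ≤ (r(r−1))^{r−1} Σ_i a_i^r + 2 Σ a_{i₁} ⋯ a_{i_r}`, where the
second sum runs over all `r`-tuples of pairwise distinct indices. -/
theorem pow_sum_le_diag_add_offdiag (n r : ℕ) (hr : 1 ≤ r)
    (a : Fin n → ℝ) (ha : ∀ i, 0 ≤ a i) :
    (∑ i, a i) ^ r ≤
      ((r * (r - 1) : ℕ) : ℝ) ^ (r - 1) * ∑ i, a i ^ r +
      2 * ∑ σ ∈ Finset.univ.filter (fun σ : Fin r → Fin n => Function.Injective σ),
            ∏ j, a (σ j) := by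
  have hS0 : (0:ℝ) ≤ ∑ i, a i := Finset.sum_nonneg fun i _ => ha i
  have hprod : ∀ σ : Fin r → Fin n, 0 ≤ ∏ j, a (σ j) := fun σ =>
    Finset.prod_nonneg fun j _ => ha (σ j)
  have hT0 : (0:ℝ) ≤ ∑ σ ∈ Finset.univ.filter
      (fun σ : Fin r → Fin n => Function.Injective σ), ∏ j, a (σ j) :=
    Finset.sum_nonneg fun σ _ => hprod σ
  have hD0 : (0:ℝ) ≤ ∑ i, a i ^ r := Finset.sum_nonneg fun i _ => pow_nonneg (ha i) r
  have hC0 : (0:ℝ) ≤ ((r * (r - 1) : ℕ) : ℝ) ^ (r - 1) := by positivity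
  -- expansion of the power of the sum
  have hpow : (∑ i, a i) ^ r = ∑ σ : Fin r → Fin n, ∏ j, a (σ j) := by
    calc (∑ i, a i) ^ r = ∏ _j : Fin r, ∑ i, a i := by
          rw [Finset.prod_const, Finset.card_univ, Fintype.card_fin]
      _ = ∑ σ ∈ Fintype.piFinset (fun _ : Fin r => (Finset.univ : Finset (Fin n))),
            ∏ j, a (σ j) := Finset.prod_univ_sum _ _
      _ = ∑ σ : Fin r → Fin n, ∏ j, a (σ j) := by rw [Fintype.piFinset_univ]
  have hsplit : (∑ i, a i) ^ r
      = (∑ σ ∈ Finset.univ.filter (fun σ : Fin r → Fin n => Function.Injective σ),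
          ∏ j, a (σ j))
        + ∑ σ ∈ Finset.univ.filter (fun σ : Fin r → Fin n => ¬ Function.Injective σ),
          ∏ j, a (σ j) := by
    rw [hpow, Finset.sum_filter_add_sum_filter_not]
  by_cases hcase : (∑ i, a i) ^ r
      ≤ 2 * ∑ σ ∈ Finset.univ.filter (fun σ : Fin r → Fin n => Function.Injective σ),
          ∏ j, a (σ j)
  · linarith [mul_nonneg hC0 hD0]
  -- main case : the noninjective part dominates
  push_neg at hcase
  -- r = 1 is impossible here, handle r ≥ 2
  obtain ⟨m, rfl⟩ : ∃ m, r = m + 2 := by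
    rcases Nat.lt_or_ge r 2 with h1 | h2
    · exfalso
      have hr1 : r = 1 := by omega
      subst hr1
      have hInj : Finset.univ.filter (fun σ : Fin 1 → Fin n => Function.Injective σ)
          = Finset.univ := by
        refine Finset.filter_true_of_mem fun σ _ => ?_
        intro x y _
        exact Subsingleton.elim x y
      rw [hInj, ← hpow] at hcase
      nlinarith [pow_nonneg hS0 1]
    · exact ⟨r - 2, by omega⟩
  set r := m + 2
  set S := ∑ i, a i with hSdef
  set Q := ∑ i, a i ^ 2 with hQdef
  set D := ∑ i, a i ^ r with hDdef
  set T := ∑ σ ∈ Finset.univ.filter (fun σ : Fin r → Fin n => Function.Injective σ),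
      ∏ j, a (σ j) with hTdef
  set N := ∑ σ ∈ Finset.univ.filter (fun σ : Fin r → Fin n => ¬ Function.Injective σ),
      ∏ j, a (σ j) with hNdef
  have hN0 : 0 ≤ N := Finset.sum_nonneg fun σ _ => hprod σ
  have hQ0 : 0 ≤ Q := Finset.sum_nonneg fun i _ => pow_nonneg (ha i) 2
  -- bound on N via pairs
  set K := Q * S ^ m with hKdef
  have hK0 : 0 ≤ K := mul_nonneg hQ0 (pow_nonneg hS0 m)
  set P : Finset (Fin r × Fin r) := (Finset.univ : Finset (Fin r)).offDiag with hPdef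
  set Plt := P.filter (fun q => q.1 < q.2) with hPltdef
  set Pgt := P.filter (fun q => ¬ q.1 < q.2) with hPgtdef
  have hf : ∀ q : Fin r × Fin r, q ∈ P →
      (∑ σ ∈ Finset.univ.filter (fun σ : Fin r → Fin n => σ q.1 = σ q.2),
        ∏ j, a (σ j)) = K := by
    intro q hq
    have hne : q.1 ≠ q.2 := (Finset.mem_offDiag.1 hq).2.2
    exact pair_sum a hne
  have hboundP : ∀ P' : Finset (Fin r × Fin r), P' ⊆ P →
      (Finset.univ.filter (fun σ : Fin r → Fin n => ¬ Function.Injective σ)) ⊆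
        P'.biUnion (fun q => Finset.univ.filter (fun σ : Fin r → Fin n => σ q.1 = σ q.2)) →
      N ≤ (P'.card : ℝ) * K := by
    intro P' hsubP hsub
    calc N ≤ ∑ σ ∈ P'.biUnion
          (fun q => Finset.univ.filter (fun σ : Fin r → Fin n => σ q.1 = σ q.2)),
          ∏ j, a (σ j) :=
        Finset.sum_le_sum_of_subset_of_nonneg hsub (fun σ _ _ => hprod σ)
      _ ≤ ∑ q ∈ P', ∑ σ ∈ Finset.univ.filter
            (fun σ : Fin r → Fin n => σ q.1 = σ q.2), ∏ j, a (σ j) :=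
        sum_biUnion_le_nonneg _ _ _ hprod
      _ = ∑ _q ∈ P', K := Finset.sum_congr rfl fun q hq => hf q (hsubP hq)
      _ = (P'.card : ℝ) * K := by rw [Finset.sum_const, nsmul_eq_mul]
  have hNlt : N ≤ (Plt.card : ℝ) * K := by
    refine hboundP Plt (Finset.filter_subset _ _) ?_
    intro σ hσ
    have hninj : ¬ Function.Injective σ := (Finset.mem_filter.1 hσ).2
    rw [Function.not_injective_iff] at hninj
    obtain ⟨x, y, hxy, hne⟩ := hninj
    rcases lt_or_gt_of_ne hne with hlt | hgt
    · exact Finset.mem_biUnion.2 ⟨(x, y),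
        Finset.mem_filter.2 ⟨Finset.mem_offDiag.2 ⟨Finset.mem_univ _, Finset.mem_univ _, hne⟩, hlt⟩,
        Finset.mem_filter.2 ⟨Finset.mem_univ _, hxy⟩⟩
    · exact Finset.mem_biUnion.2 ⟨(y, x),
        Finset.mem_filter.2 ⟨Finset.mem_offDiag.2
          ⟨Finset.mem_univ _, Finset.mem_univ _, hne.symm⟩, hgt⟩,
        Finset.mem_filter.2 ⟨Finset.mem_univ _, hxy.symm⟩⟩
  have hNgt : N ≤ (Pgt.card : ℝ) * K := by
    refine hboundP Pgt (Finset.filter_subset _ _) ?_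
    intro σ hσ
    have hninj : ¬ Function.Injective σ := (Finset.mem_filter.1 hσ).2
    rw [Function.not_injective_iff] at hninj
    obtain ⟨x, y, hxy, hne⟩ := hninj
    rcases lt_or_gt_of_ne hne with hlt | hgt
    · exact Finset.mem_biUnion.2 ⟨(y, x),
        Finset.mem_filter.2 ⟨Finset.mem_offDiag.2
          ⟨Finset.mem_univ _, Finset.mem_univ _, hne.symm⟩, not_lt.2 hlt.le⟩,
        Finset.mem_filter.2 ⟨Finset.mem_univ _, hxy.symm⟩⟩
    · exact Finset.mem_biUnion.2 ⟨(x, y),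
        Finset.mem_filter.2 ⟨Finset.mem_offDiag.2
          ⟨Finset.mem_univ _, Finset.mem_univ _, hne⟩, not_lt.2 hgt.le⟩,
        Finset.mem_filter.2 ⟨Finset.mem_univ _, hxy⟩⟩
  have hcards : Plt.card + Pgt.card = r * (r - 1) := by
    have h1 : Plt.card + Pgt.card = P.card :=
      Finset.card_filter_add_card_filter_not (p := fun q : Fin r × Fin r => q.1 < q.2)
    rw [h1, hPdef, Finset.offDiag_card, Finset.card_univ, Fintype.card_fin,
      show r * r = r * (r - 1) + r from by
        conv_lhs => rw [show r = (r - 1) + 1 from by omega]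
        rw [Nat.mul_succ, Nat.sub_add_cancel (by omega : 1 ≤ r)],
      Nat.add_sub_cancel]
  have h2N : 2 * N ≤ ((r * (r - 1) : ℕ) : ℝ) * K := by
    have := add_le_add hNlt hNgt
    have hc : ((Plt.card : ℝ) + (Pgt.card : ℝ)) = ((r * (r - 1) : ℕ) : ℝ) := by
      rw [← Nat.cast_add, hcards]
    nlinarith
  -- hence S^r ≤ r(r-1) Q S^m
  have hkey : S ^ r ≤ ((r * (r - 1) : ℕ) : ℝ) * (Q * S ^ m) := by
    have : S ^ r < 2 * N := by
      rw [hsplit] at hcase ⊢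
      linarith
    calc S ^ r ≤ 2 * N := this.le
      _ ≤ ((r * (r - 1) : ℕ) : ℝ) * K := h2N
      _ = ((r * (r - 1) : ℕ) : ℝ) * (Q * S ^ m) := by rw [hKdef]
  -- case S = 0
  rcases eq_or_lt_of_le hS0 with hSz | hSpos
  · rw [← hSz]
    rw [zero_pow (by omega : r ≠ 0)]
    linarith [mul_nonneg hC0 hD0]
  -- the Hölder step
  set c : ℝ := ((r * (r - 1) : ℕ) : ℝ) with hcdef
  have hc0 : 0 ≤ c := Nat.cast_nonneg _
  have hholder : Q ^ (m + 1) ≤ S ^ m * D := holder_pow a ha m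
  have hmain : S ^ r ≤ c ^ (m + 1) * D := by
    have h1 : (S ^ r) ^ (m + 1) ≤ (c * (Q * S ^ m)) ^ (m + 1) :=
      pow_le_pow_left₀ (pow_nonneg hS0 r) hkey (m + 1)
    have h2 : (c * (Q * S ^ m)) ^ (m + 1)
        = c ^ (m + 1) * (Q ^ (m + 1) * (S ^ m) ^ (m + 1)) := by ring
    have h3 : c ^ (m + 1) * (Q ^ (m + 1) * (S ^ m) ^ (m + 1))
        ≤ c ^ (m + 1) * ((S ^ m * D) * (S ^ m) ^ (m + 1)) := by
      have := mul_le_mul_of_nonneg_right hholder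
        (pow_nonneg (pow_nonneg hS0 m) (m + 1))
      exact mul_le_mul_of_nonneg_left this (pow_nonneg hc0 (m + 1))
    have h4 : c ^ (m + 1) * ((S ^ m * D) * (S ^ m) ^ (m + 1))
        = (c ^ (m + 1) * D) * (S ^ m) ^ (m + 2) := by ring
    have h5 : (S ^ r) ^ (m + 1) = S ^ r * (S ^ m) ^ (m + 2) := by
      rw [← pow_mul, ← pow_mul, ← pow_add]
      congr 1
      show (m + 2) * (m + 1) = (m + 2) + m * (m + 2)
      ring
    have h6 : S ^ r * (S ^ m) ^ (m + 2) ≤ (c ^ (m + 1) * D) * (S ^ m) ^ (m + 2) := by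
      calc S ^ r * (S ^ m) ^ (m + 2) = (S ^ r) ^ (m + 1) := h5.symm
        _ ≤ (c * (Q * S ^ m)) ^ (m + 1) := h1
        _ = c ^ (m + 1) * (Q ^ (m + 1) * (S ^ m) ^ (m + 1)) := h2
        _ ≤ c ^ (m + 1) * ((S ^ m * D) * (S ^ m) ^ (m + 1)) := h3
        _ = (c ^ (m + 1) * D) * (S ^ m) ^ (m + 2) := h4
    exact le_of_mul_le_mul_right h6 (pow_pos (pow_pos hSpos m) (m + 2))
  have hr1 : r - 1 = m + 1 := rfl
  rw [hr1]
  linarith
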